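/- For every set F of polynomials in 𝕋[x_1,…,x_n], the tropical algebraic set Z(F) = {a ∈ 𝕋^n : f(a) ∈ 𝕌̄ for all f ∈ F} is a closed subset of 𝕋^n. -/

import Mathlib

/-- The extended tropical semiring `𝕋`: tangible reals `(a, false)`,
ghost reals `(a, true)`, and `none` = `-∞`. -/
def T : Type := Option (ℝ × Bool)

namespace T

/-- The tangible element of value `a`. -/
def tang (a : ℝ) : T := some (a, false)

/-- The ghost element `a^ν` of value `a`. -/
def ghost (a : ℝ) : T := some (a, true)

/-- Tropical addition on `𝕋`. -/
noncomputable def add : T → T → T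
  | none, y => y
  | some p, none => some p
  | some (a, s), some (b, t) =>
      if a < b then some (b, t) else if b < a then some (a, s) else some (a, true)

/-- Tropical multiplication on `𝕋`. -/
noncomputable def mul : T → T → T
  | none, _ => none
  | some _, none => none
  | some (a, s), some (b, t) => some (a + b, s || t)

lemma add_assoc' : ∀ x y z : T, add (add x y) z = add x (add y z) := by
  show ∀ x y z : T, @Eq (Option (ℝ × Bool)) (add (add x y) z) (add x (add y z))
  rintro (_ | ⟨a, s⟩) (_ | ⟨b, t⟩) (_ | ⟨c, u⟩) <;> simp only [add] <;> grind [add]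

lemma add_comm' : ∀ x y : T, add x y = add y x := by
  show ∀ x y : T, @Eq (Option (ℝ × Bool)) (add x y) (add y x)
  rintro (_ | ⟨a, s⟩) (_ | ⟨b, t⟩) <;> simp only [add] <;> grind

lemma mul_assoc' : ∀ x y z : T, mul (mul x y) z = mul x (mul y z) := by
  show ∀ x y z : T, @Eq (Option (ℝ × Bool)) (mul (mul x y) z) (mul x (mul y z))
  rintro (_ | ⟨a, s⟩) (_ | ⟨b, t⟩) (_ | ⟨c, u⟩) <;>
    simp [mul, add_assoc, Bool.or_assoc]

lemma mul_comm' : ∀ x y : T, mul x y = mul y x := by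
  show ∀ x y : T, @Eq (Option (ℝ × Bool)) (mul x y) (mul y x)
  rintro (_ | ⟨a, s⟩) (_ | ⟨b, t⟩) <;> simp [mul, add_comm, Bool.or_comm]

lemma left_distrib' : ∀ x y z : T, mul x (add y z) = add (mul x y) (mul x z) := by
  show ∀ x y z : T, @Eq (Option (ℝ × Bool)) (mul x (add y z)) (add (mul x y) (mul x z))
  rintro (_ | ⟨a, s⟩) (_ | ⟨b, t⟩) (_ | ⟨c, u⟩) <;> simp only [add, mul] <;> grind [add, mul]

noncomputable instance : Zero T := ⟨none⟩
noncomputable instance : One T := ⟨some (0, false)⟩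
noncomputable instance : Add T := ⟨add⟩
noncomputable instance : Mul T := ⟨mul⟩

noncomputable instance : CommSemiring T where
  add := (· + ·)
  zero := 0
  add_assoc := add_assoc'
  zero_add := fun x => by cases x <;> rfl
  add_zero := fun x => by cases x <;> rfl
  add_comm := add_comm'
  mul := (· * ·)
  one := 1
  mul_assoc := mul_assoc'
  one_mul := fun x => by
    show @Eq (Option (ℝ × Bool)) (mul (some (0, false)) x) x
    rcases x with _ | ⟨a, s⟩ <;> simp [mul]
  mul_one := fun x => by
    show @Eq (Option (ℝ × Bool)) (mul x (some (0, false))) x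
    rcases x with _ | ⟨a, s⟩ <;> simp [mul]
  mul_comm := mul_comm'
  zero_mul := fun x => by cases x <;> rfl
  mul_zero := fun x => by cases x <;> rfl
  left_distrib := left_distrib'
  right_distrib := fun x y z => by
    show mul (add x y) z = add (mul x z) (mul y z)
    rw [mul_comm', left_distrib', mul_comm' z x, mul_comm' z y]
  nsmul := nsmulRec

/-- Membership in the ghost part `𝕌̄ = 𝕌 ∪ {-∞}` of `𝕋`. -/
def isGhost : T → Prop
  | none => True
  | some (_, s) => s = true

/-- Membership in the tangible part `ℝ ∪ {-∞}` of `𝕋`. -/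
def isTangible : T → Prop
  | none => True
  | some (_, s) => s = false

/-- The underlying real value (junk value `0` at `-∞`); this is `π` on elements `≠ -∞`. -/
def val : T → ℝ
  | none => 0
  | some (a, _) => a

/-- The ghost map `ν`. -/
def nu : T → T
  | none => none
  | some (a, _) => some (a, true)

end T

namespace T

/-- The model value in the half line `[0,∞)`: `-∞ ↦ 0`, an element of value `a ↦ exp a`. -/
noncomputable def gval : T → ℝ
  | none => 0
  | some (a, _) => Real.exp a

lemma nu_isGhost : ∀ x : T, isGhost (nu x)
  | none => trivial
  | some (_, _) => rfl

lemma gval_injOn_tang : Set.InjOn gval {x : T | isTangible x} := by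
  rintro (_ | ⟨a, s⟩) hx (_ | ⟨b, t⟩) hy h <;>
    simp only [gval, Set.mem_setOf_eq, isTangible] at hx hy h
  · rfl
  · exact absurd h.symm (Real.exp_pos b).ne'
  · exact absurd h (Real.exp_pos a).ne'
  · rw [Real.exp_eq_exp] at h; subst hx; subst hy; subst h; rfl

lemma gval_injOn_ghost : Set.InjOn gval {x : T | isGhost x} := by
  rintro (_ | ⟨a, s⟩) hx (_ | ⟨b, t⟩) hy h <;>
    simp only [gval, Set.mem_setOf_eq, isGhost] at hx hy h
  · rfl
  · exact absurd h.symm (Real.exp_pos b).ne'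
  · exact absurd h (Real.exp_pos a).ne'
  · rw [Real.exp_eq_exp] at h; subst hx; subst hy; subst h; rfl

lemma gval_image_tang : gval '' {x : T | isTangible x} = Set.Ici 0 := by
  ext y
  constructor
  · rintro ⟨(_ | ⟨a, s⟩), hx, rfl⟩
    · exact Set.self_mem_Ici
    · exact le_of_lt (by simpa [gval] using Real.exp_pos a)
  · intro hy
    rcases eq_or_lt_of_le (Set.mem_Ici.mp hy) with h | h
    · exact ⟨none, trivial, h⟩
    · exact ⟨some (Real.log y, false), rfl, by simp [gval, Real.exp_log h]⟩

lemma gval_image_ghost : gval '' {x : T | isGhost x} = Set.Ici 0 := by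
  ext y
  constructor
  · rintro ⟨(_ | ⟨a, s⟩), hx, rfl⟩
    · exact Set.self_mem_Ici
    · exact le_of_lt (by simpa [gval] using Real.exp_pos a)
  · intro hy
    rcases eq_or_lt_of_le (Set.mem_Ici.mp hy) with h | h
    · exact ⟨none, trivial, h⟩
    · exact ⟨some (Real.log y, true), rfl, by simp [gval, Real.exp_log h]⟩

/-- The closed sets of the topology on `𝕋`: both the tangible and the ghost layers are
closed in the model `[0,∞)` of `𝕌̄`, and the ghost image of the tangible layer is
contained in the set. -/
def TIsClosed (W : Set T) : Prop :=
  IsClosed (gval '' (W ∩ {x | isTangible x})) ∧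
  IsClosed (gval '' (W ∩ {x | isGhost x})) ∧
  nu '' (W ∩ {x | isTangible x}) ⊆ W ∩ {x | isGhost x}

/-- The topology on `𝕋`. -/
noncomputable instance : TopologicalSpace T :=
  TopologicalSpace.ofClosed {W | TIsClosed W}
    (by
      refine ⟨?_, ?_, ?_⟩ <;> simp [TIsClosed])
    (fun A hA => by
      rcases A.eq_empty_or_nonempty with rfl | hne
      · rw [Set.sInter_empty]
        refine ⟨?_, ?_, ?_⟩
        · rw [Set.univ_inter, gval_image_tang]; exact isClosed_Ici
        · rw [Set.univ_inter, gval_image_ghost]; exact isClosed_Ici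
        · rintro y ⟨x, ⟨-, _⟩, rfl⟩
          exact ⟨trivial, nu_isGhost x⟩
      · have : Nonempty A := hne.to_subtype
        have h1 : (⋂₀ A) ∩ {x : T | isTangible x}
            = ⋂ (W : A), ((W : Set T) ∩ {x | isTangible x}) := by
          ext x
          simp only [Set.mem_inter_iff, Set.mem_sInter, Set.mem_iInter, Set.mem_setOf_eq]
          constructor
          · rintro ⟨h, ht⟩ W; exact ⟨h W W.2, ht⟩
          · intro h
            obtain ⟨W, hW⟩ := hne
            exact ⟨fun V hV => (h ⟨V, hV⟩).1, (h ⟨W, hW⟩).2⟩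
        have h2 : (⋂₀ A) ∩ {x : T | isGhost x}
            = ⋂ (W : A), ((W : Set T) ∩ {x | isGhost x}) := by
          ext x
          simp only [Set.mem_inter_iff, Set.mem_sInter, Set.mem_iInter, Set.mem_setOf_eq]
          constructor
          · rintro ⟨h, ht⟩ W; exact ⟨h W W.2, ht⟩
          · intro h
            obtain ⟨W, hW⟩ := hne
            exact ⟨fun V hV => (h ⟨V, hV⟩).1, (h ⟨W, hW⟩).2⟩
        refine ⟨?_, ?_, ?_⟩
        · rw [h1, Set.InjOn.image_iInter_eq
            (gval_injOn_tang.mono (Set.iUnion_subset fun W => Set.inter_subset_right))]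
          exact isClosed_iInter fun W => (hA W.2).1
        · rw [h2, Set.InjOn.image_iInter_eq
            (gval_injOn_ghost.mono (Set.iUnion_subset fun W => Set.inter_subset_right))]
          exact isClosed_iInter fun W => (hA W.2).2.1
        · rintro y ⟨x, ⟨hx, hxt⟩, rfl⟩
          refine ⟨fun W hW => ((hA hW).2.2 ⟨x, ⟨hx W hW, hxt⟩, rfl⟩).1, nu_isGhost x⟩)
    (fun A hA B hB => by
      have h1 : (A ∪ B) ∩ {x : T | isTangible x}
          = (A ∩ {x | isTangible x}) ∪ (B ∩ {x | isTangible x}) :=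
        Set.union_inter_distrib_right A B _
      have h2 : (A ∪ B) ∩ {x : T | isGhost x}
          = (A ∩ {x | isGhost x}) ∪ (B ∩ {x | isGhost x}) :=
        Set.union_inter_distrib_right A B _
      refine ⟨?_, ?_, ?_⟩
      · rw [h1, Set.image_union]; exact hA.1.union hB.1
      · rw [h2, Set.image_union]; exact hA.2.1.union hB.2.1
      · rintro y ⟨x, ⟨hx, hxt⟩, rfl⟩
        rcases hx with hxA | hxB
        · have h := hA.2.2 ⟨x, ⟨hxA, hxt⟩, rfl⟩
          exact ⟨Or.inl h.1, h.2⟩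
        · have h := hB.2.2 ⟨x, ⟨hxB, hxt⟩, rfl⟩
          exact ⟨Or.inr h.1, h.2⟩)

end T

namespace T

lemma isOpen_iff' {U : Set T} : IsOpen U ↔ TIsClosed Uᶜ := Iff.rfl

lemma mul_def (x y : T) : x * y = mul x y := rfl
lemma add_def (x y : T) : x + y = add x y := rfl

lemma gval_nonneg : ∀ x : T, 0 ≤ gval x
  | none => le_refl 0
  | some (a, _) => (Real.exp_pos a).le

lemma eq_none_of_gval_nonpos : ∀ {x : T}, gval x ≤ 0 → x = none
  | none, _ => rfl
  | some (a, _), h => absurd h (not_le.2 (Real.exp_pos a))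

lemma tangible_or_ghost : ∀ x : T, isTangible x ∨ isGhost x
  | none => Or.inl trivial
  | some (_, false) => Or.inl rfl
  | some (_, true) => Or.inr rfl

lemma eq_none_of_tang_ghost : ∀ {x : T}, isTangible x → isGhost x → x = none
  | none, _, _ => rfl
  | some (_, _), h1, h2 => by
      simp only [isTangible] at h1
      simp only [isGhost] at h2
      rw [h1] at h2
      cases h2

lemma gval_nu : ∀ x : T, gval (nu x) = gval x
  | none => rfl
  | some _ => rfl

lemma gval_mul : ∀ x y : T, gval (x * y) = gval x * gval y := by
  rintro (_ | ⟨a, s⟩) (_ | ⟨b, t⟩) <;>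
    show gval (mul _ _) = _ <;>
    simp [mul, gval, Real.exp_add]

lemma gval_add : ∀ x y : T, gval (x + y) = max (gval x) (gval y) := by
  rintro (_ | ⟨a, s⟩) (_ | ⟨b, t⟩) <;> show gval (add _ _) = _ <;> simp only [add]
  · simp
  · exact (max_eq_right (Real.exp_pos b).le).symm
  · exact (max_eq_left (Real.exp_pos a).le).symm
  · rcases lt_trichotomy a b with h1 | h1 | h1
    · refine (congrArg gval (if_pos h1)).trans ?_
      exact (max_eq_right (Real.exp_le_exp.2 h1.le)).symm
    · subst h1
      refine (congrArg gval ((if_neg (lt_irrefl a)).trans (if_neg (lt_irrefl a)))).trans ?_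
      exact (max_self _).symm
    · refine (congrArg gval ((if_neg (not_lt.2 h1.le)).trans (if_pos h1))).trans ?_
      exact (max_eq_left (Real.exp_le_exp.2 h1.le)).symm

lemma add_right_dominant : ∀ {x y : T}, gval x < gval y → x + y = y := by
  rintro (_ | ⟨a, s⟩) (_ | ⟨b, t⟩) h
  · rfl
  · rfl
  · exact absurd h (not_lt.2 (gval_nonneg _))
  · have hab : a < b := Real.exp_lt_exp.1 h
    show @Eq (Option (ℝ × Bool)) (add (some (a, s)) (some (b, t))) (some (b, t))
    simp only [add]
    exact if_pos hab

lemma add_left_dominant {x y : T} (h : gval y < gval x) : x + y = x := by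
  rw [add_def, add_comm', ← add_def, add_right_dominant h]

lemma isOpen_preimage_gval {S : Set ℝ} (hS : IsOpen S) : IsOpen (gval ⁻¹' S) := by
  rw [isOpen_iff']
  have hc : ((gval ⁻¹' S)ᶜ : Set T) = gval ⁻¹' Sᶜ := rfl
  refine ⟨?_, ?_, ?_⟩
  · rw [hc, Set.inter_comm, Set.image_inter_preimage, gval_image_tang]
    exact isClosed_Ici.inter hS.isClosed_compl
  · rw [hc, Set.inter_comm, Set.image_inter_preimage, gval_image_ghost]
    exact isClosed_Ici.inter hS.isClosed_compl
  · rintro y ⟨x, ⟨hx, -⟩, rfl⟩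
    refine ⟨?_, nu_isGhost x⟩
    intro hmem
    exact hx (by simpa [Set.mem_preimage, gval_nu] using hmem)

lemma isOpen_preimage_gval_tang {S : Set ℝ} (hS : IsOpen S) (h0 : (0 : ℝ) ∉ S) :
    IsOpen (gval ⁻¹' S ∩ {x : T | isTangible x}) := by
  rw [isOpen_iff']
  have h1 : (gval ⁻¹' S ∩ {x : T | isTangible x})ᶜ ∩ {x : T | isTangible x}
      = {x : T | isTangible x} ∩ gval ⁻¹' Sᶜ := by
    ext x
    simp only [Set.mem_inter_iff, Set.mem_compl_iff, Set.mem_preimage, Set.mem_setOf_eq]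
    tauto
  have h2 : (gval ⁻¹' S ∩ {x : T | isTangible x})ᶜ ∩ {x : T | isGhost x}
      = {x : T | isGhost x} := by
    ext x
    simp only [Set.mem_inter_iff, Set.mem_compl_iff, Set.mem_preimage, Set.mem_setOf_eq]
    constructor
    · rintro ⟨-, h⟩; exact h
    · intro hg
      refine ⟨fun hmem => ?_, hg⟩
      have hx : x = none := eq_none_of_tang_ghost hmem.2 hg
      subst hx
      exact h0 hmem.1
  refine ⟨?_, ?_, ?_⟩
  · rw [h1, Set.image_inter_preimage, gval_image_tang]
    exact isClosed_Ici.inter hS.isClosed_compl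
  · rw [h2, gval_image_ghost]
    exact isClosed_Ici
  · rw [h2]
    rintro y ⟨x, -, rfl⟩
    exact nu_isGhost x

lemma exists_nbhd_tang {U : Set T} (hU : IsOpen U) {a : ℝ}
    (ha : (some (a, false) : T) ∈ U) :
    ∃ ε > 0, ∀ b : ℝ, |b - a| < ε → (some (b, false) : T) ∈ U := by
  obtain ⟨hT, -, -⟩ := isOpen_iff'.1 hU
  have hmem : Real.exp a ∈ (gval '' (Uᶜ ∩ {x : T | isTangible x}))ᶜ := by
    rintro ⟨x, ⟨hx1, hx2⟩, hx3⟩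
    have hx : x = some (a, false) :=
      gval_injOn_tang hx2 (show isTangible (some (a, false) : T) from rfl) hx3
    exact hx1 (hx ▸ ha)
  obtain ⟨δ, hδ, hball⟩ := Metric.isOpen_iff.1 hT.isOpen_compl _ hmem
  obtain ⟨ε, hε, hcont⟩ := Metric.continuousAt_iff.1 Real.continuous_exp.continuousAt δ hδ
  refine ⟨ε, hε, fun b hb => ?_⟩
  by_contra hbU
  exact hball (hcont (show dist b a < ε by rwa [Real.dist_eq]))
    ⟨some (b, false), ⟨hbU, rfl⟩, rfl⟩

lemma exists_nbhd_ghost {U : Set T} (hU : IsOpen U) {a : ℝ}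
    (ha : (some (a, true) : T) ∈ U) :
    ∃ ε > 0, ∀ b : ℝ, |b - a| < ε →
      (some (b, false) : T) ∈ U ∧ (some (b, true) : T) ∈ U := by
  obtain ⟨-, hG, hnu⟩ := isOpen_iff'.1 hU
  have hmem : Real.exp a ∈ (gval '' (Uᶜ ∩ {x : T | isGhost x}))ᶜ := by
    rintro ⟨x, ⟨hx1, hx2⟩, hx3⟩
    have hx : x = some (a, true) :=
      gval_injOn_ghost hx2 (show isGhost (some (a, true) : T) from rfl) hx3
    exact hx1 (hx ▸ ha)
  obtain ⟨δ, hδ, hball⟩ := Metric.isOpen_iff.1 hG.isOpen_compl _ hmem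
  obtain ⟨ε, hε, hcont⟩ := Metric.continuousAt_iff.1 Real.continuous_exp.continuousAt δ hδ
  refine ⟨ε, hε, fun b hb => ?_⟩
  have hgb : (some (b, true) : T) ∈ U := by
    by_contra hbU
    exact hball (hcont (show dist b a < ε by rwa [Real.dist_eq]))
      ⟨some (b, true), ⟨hbU, rfl⟩, rfl⟩
  refine ⟨?_, hgb⟩
  by_contra hbU
  have hmem2 := hnu ⟨some (b, false), ⟨hbU, rfl⟩, rfl⟩
  exact hmem2.1 hgb

lemma exists_nbhd_none {U : Set T} (hU : IsOpen U) (ha : (none : T) ∈ U) :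
    ∃ ε > 0, ∀ x : T, gval x < ε → x ∈ U := by
  obtain ⟨hT, hG, -⟩ := isOpen_iff'.1 hU
  have h1 : (0 : ℝ) ∈ (gval '' (Uᶜ ∩ {x : T | isTangible x}))ᶜ := by
    rintro ⟨x, ⟨hx1, -⟩, hx3⟩
    have hx : x = none := eq_none_of_gval_nonpos hx3.le
    exact hx1 (hx ▸ ha)
  have h2 : (0 : ℝ) ∈ (gval '' (Uᶜ ∩ {x : T | isGhost x}))ᶜ := by
    rintro ⟨x, ⟨hx1, -⟩, hx3⟩
    have hx : x = none := eq_none_of_gval_nonpos hx3.le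
    exact hx1 (hx ▸ ha)
  obtain ⟨δ1, hδ1, hb1⟩ := Metric.isOpen_iff.1 hT.isOpen_compl _ h1
  obtain ⟨δ2, hδ2, hb2⟩ := Metric.isOpen_iff.1 hG.isOpen_compl _ h2
  refine ⟨min δ1 δ2, lt_min hδ1 hδ2, fun x hx => ?_⟩
  by_contra hxU
  have hd : dist (gval x) 0 < min δ1 δ2 := by
    rw [Real.dist_eq, sub_zero, abs_of_nonneg (gval_nonneg x)]
    exact hx
  rcases tangible_or_ghost x with h | h
  · exact hb1 (lt_of_lt_of_le hd (min_le_left _ _)) ⟨x, ⟨hxU, h⟩, rfl⟩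
  · exact hb2 (lt_of_lt_of_le hd (min_le_right _ _)) ⟨x, ⟨hxU, h⟩, rfl⟩

lemma mem_Ioo_preimage {a ε : ℝ} {x : T}
    (h : gval x ∈ Set.Ioo (Real.exp (a - ε)) (Real.exp (a + ε))) :
    ∃ c s, x = some (c, s) ∧ |c - a| < ε := by
  rcases x with _ | ⟨c, s⟩
  · exact absurd h.1 (not_lt.2 (Real.exp_pos _).le)
  · refine ⟨c, s, rfl, ?_⟩
    have h1 : a - ε < c := Real.exp_lt_exp.1 h.1
    have h2 : c < a + ε := Real.exp_lt_exp.1 h.2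
    rw [abs_sub_lt_iff]
    constructor <;> linarith

lemma mem_Ioo_preimage_self {a ε : ℝ} (hε : 0 < ε) (s : Bool) :
    (some (a, s) : T) ∈ gval ⁻¹' Set.Ioo (Real.exp (a - ε)) (Real.exp (a + ε)) := by
  constructor <;> exact Real.exp_lt_exp.2 (by linarith)

private lemma mul_box_none {U : Set T} (hU : IsOpen U) (h0 : (none : T) ∈ U) (w : T) :
    ∃ u v : Set T, IsOpen u ∧ IsOpen v ∧ (none : T) ∈ u ∧ w ∈ v ∧
      ∀ p ∈ u, ∀ q ∈ v, p * q ∈ U := by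
  obtain ⟨ε, hε, hball⟩ := exists_nbhd_none hU h0
  set M := gval w + 1 with hM
  have hMpos : 0 < M := by
    have := gval_nonneg w
    simp only [hM]
    linarith
  refine ⟨gval ⁻¹' Set.Iio (ε / M), gval ⁻¹' Set.Iio M,
    isOpen_preimage_gval isOpen_Iio, isOpen_preimage_gval isOpen_Iio, ?_, ?_, ?_⟩
  · show gval (none : T) < ε / M
    have h00 : gval (none : T) = 0 := rfl
    rw [h00]
    exact div_pos hε hMpos
  · show gval w < M
    simp only [hM]
    linarith
  · intro p hp q hq
    apply hball
    rw [gval_mul]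
    have hp' : gval p < ε / M := hp
    have hq' : gval q < M := hq
    calc gval p * gval q ≤ gval p * M :=
          mul_le_mul_of_nonneg_left hq'.le (gval_nonneg p)
      _ < ε := (lt_div_iff₀ hMpos).1 hp'

noncomputable instance : ContinuousMul T := by
  constructor
  rw [continuous_iff_continuousAt]
  rintro ⟨x, y⟩
  show Filter.Tendsto (fun p : T × T => p.1 * p.2) (nhds (x, y)) (nhds (x * y))
  rw [tendsto_nhds]
  intro U hU hmem
  rw [mem_nhds_prod_iff]
  rcases x with _ | ⟨a, s⟩
  · obtain ⟨u, v, hu, hv, hxu, hyv, hprod⟩ := mul_box_none hU hmem y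
    refine ⟨u, hu.mem_nhds hxu, v, hv.mem_nhds hyv, ?_⟩
    rintro ⟨p, q⟩ ⟨hp, hq⟩
    exact hprod p hp q hq
  · rcases y with _ | ⟨b, t⟩
    · obtain ⟨u, v, hu, hv, hyu, hxv, hprod⟩ := mul_box_none hU hmem (some (a, s))
      refine ⟨v, hv.mem_nhds hxv, u, hu.mem_nhds hyu, ?_⟩
      rintro ⟨p, q⟩ ⟨hp, hq⟩
      show p * q ∈ U
      rw [mul_def, mul_comm', ← mul_def]
      exact hprod q hq p hp
    · have hmem2 : (some (a + b, s || t) : T) ∈ U := hmem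
      cases hst : s || t
      · rw [hst] at hmem2
        obtain ⟨ε, hε, hball⟩ := exists_nbhd_tang hU hmem2
        have hst' := Bool.or_eq_false_iff.1 hst
        refine ⟨gval ⁻¹' Set.Ioo (Real.exp (a - ε / 2)) (Real.exp (a + ε / 2))
            ∩ {x : T | isTangible x},
          (isOpen_preimage_gval_tang isOpen_Ioo
            (fun h => absurd h.1 (not_lt.2 (Real.exp_pos _).le))).mem_nhds
            ⟨mem_Ioo_preimage_self (by linarith) s, by
              show isTangible (some (a, s)); rw [hst'.1]; rfl⟩,
          gval ⁻¹' Set.Ioo (Real.exp (b - ε / 2)) (Real.exp (b + ε / 2))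
            ∩ {x : T | isTangible x},
          (isOpen_preimage_gval_tang isOpen_Ioo
            (fun h => absurd h.1 (not_lt.2 (Real.exp_pos _).le))).mem_nhds
            ⟨mem_Ioo_preimage_self (by linarith) t, by
              show isTangible (some (b, t)); rw [hst'.2]; rfl⟩, ?_⟩
        rintro ⟨p, q⟩ ⟨hp, hq⟩
        obtain ⟨a', s', hps, ha'⟩ := mem_Ioo_preimage hp.1
        obtain ⟨b', t', hqs, hb'⟩ := mem_Ioo_preimage hq.1
        have hs' : s' = false := by
          have := hp.2
          rw [hps] at this
          exact this
        have ht' : t' = false := by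
          have := hq.2
          rw [hqs] at this
          exact this
        subst hps; subst hqs; subst hs'; subst ht'
        have habs : |a' + b' - (a + b)| ≤ |a' - a| + |b' - b| := by
          have hr : a' + b' - (a + b) = (a' - a) + (b' - b) := by ring
          rw [hr]
          exact abs_add_le _ _
        exact hball (a' + b') (by linarith)
      · rw [hst] at hmem2
        obtain ⟨ε, hε, hball⟩ := exists_nbhd_ghost hU hmem2
        refine ⟨gval ⁻¹' Set.Ioo (Real.exp (a - ε / 2)) (Real.exp (a + ε / 2)),
          (isOpen_preimage_gval isOpen_Ioo).mem_nhds
            (mem_Ioo_preimage_self (by linarith) s),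
          gval ⁻¹' Set.Ioo (Real.exp (b - ε / 2)) (Real.exp (b + ε / 2)),
          (isOpen_preimage_gval isOpen_Ioo).mem_nhds
            (mem_Ioo_preimage_self (by linarith) t), ?_⟩
        rintro ⟨p, q⟩ ⟨hp, hq⟩
        obtain ⟨a', s', hps, ha'⟩ := mem_Ioo_preimage hp
        obtain ⟨b', t', hqs, hb'⟩ := mem_Ioo_preimage hq
        subst hps; subst hqs
        have habs : |a' + b' - (a + b)| < ε := by
          have hr : a' + b' - (a + b) = (a' - a) + (b' - b) := by ring
          have := abs_add_le (a' - a) (b' - b)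
          rw [hr]
          linarith
        have h2 := hball (a' + b') habs
        clear hp hq
        cases s' <;> cases t'
        · exact h2.1
        · exact h2.2
        · exact h2.2
        · exact h2.2

noncomputable instance : ContinuousAdd T := by
  constructor
  rw [continuous_iff_continuousAt]
  rintro ⟨x, y⟩
  show Filter.Tendsto (fun p : T × T => p.1 + p.2) (nhds (x, y)) (nhds (x + y))
  rw [tendsto_nhds]
  intro U hU hmem
  rw [mem_nhds_prod_iff]
  rcases lt_trichotomy (gval x) (gval y) with h | h | h
  · have hy : x + y = y := add_right_dominant h
    rw [hy] at hmem
    set c := (gval x + gval y) / 2 with hc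
    have hc1 : gval x < c := by simp only [hc]; linarith
    have hc2 : c < gval y := by simp only [hc]; linarith
    refine ⟨gval ⁻¹' Set.Iio c, (isOpen_preimage_gval isOpen_Iio).mem_nhds hc1,
      U ∩ gval ⁻¹' Set.Ioi c,
      (hU.inter (isOpen_preimage_gval isOpen_Ioi)).mem_nhds ⟨hmem, hc2⟩, ?_⟩
    rintro ⟨p, q⟩ ⟨hp, hq⟩
    show p + q ∈ U
    have hpq : gval p < gval q := lt_trans hp hq.2
    rw [add_right_dominant hpq]
    exact hq.1
  · rcases x with _ | ⟨a, s⟩ <;> rcases y with _ | ⟨b, t⟩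
    · obtain ⟨ε, hε, hball⟩ := exists_nbhd_none hU hmem
      refine ⟨gval ⁻¹' Set.Iio ε,
        (isOpen_preimage_gval isOpen_Iio).mem_nhds hε,
        gval ⁻¹' Set.Iio ε,
        (isOpen_preimage_gval isOpen_Iio).mem_nhds hε, ?_⟩
      rintro ⟨p, q⟩ ⟨hp, hq⟩
      show p + q ∈ U
      apply hball
      rw [gval_add]
      exact max_lt hp hq
    · exfalso
      have h' : (0 : ℝ) = Real.exp b := h
      exact (Real.exp_pos b).ne' h'.symm
    · exfalso
      have h' : Real.exp a = (0 : ℝ) := h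
      exact (Real.exp_pos a).ne' h'
    · have h' : Real.exp a = Real.exp b := h
      have hab : a = b := Real.exp_injective h'
      subst hab
      have hsum : add (some (a, s)) (some (a, t)) = some (a, true) := by
        simp only [add]
        exact (if_neg (lt_irrefl a)).trans (if_neg (lt_irrefl a))
      have hmem2 : (some (a, true) : T) ∈ U := by
        rw [← hsum]
        exact hmem
      obtain ⟨ε, hε, hball⟩ := exists_nbhd_ghost hU hmem2
      refine ⟨gval ⁻¹' Set.Ioo (Real.exp (a - ε)) (Real.exp (a + ε)),
        (isOpen_preimage_gval isOpen_Ioo).mem_nhds (mem_Ioo_preimage_self hε s),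
        gval ⁻¹' Set.Ioo (Real.exp (a - ε)) (Real.exp (a + ε)),
        (isOpen_preimage_gval isOpen_Ioo).mem_nhds (mem_Ioo_preimage_self hε t), ?_⟩
      rintro ⟨p, q⟩ ⟨hp, hq⟩
      show p + q ∈ U
      have hval : gval (p + q) ∈ Set.Ioo (Real.exp (a - ε)) (Real.exp (a + ε)) := by
        rw [gval_add]
        exact ⟨lt_max_iff.2 (Or.inl hp.1), max_lt hp.2 hq.2⟩
      obtain ⟨c, s', hcs, hcd⟩ := mem_Ioo_preimage hval
      rw [hcs]
      have h2 := hball c hcd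
      clear hcs hval
      cases s'
      · exact h2.1
      · exact h2.2
  · have hx : x + y = x := add_left_dominant h
    rw [hx] at hmem
    set c := (gval x + gval y) / 2 with hc
    have hc1 : gval y < c := by simp only [hc]; linarith
    have hc2 : c < gval x := by simp only [hc]; linarith
    refine ⟨U ∩ gval ⁻¹' Set.Ioi c,
      (hU.inter (isOpen_preimage_gval isOpen_Ioi)).mem_nhds ⟨hmem, hc2⟩,
      gval ⁻¹' Set.Iio c, (isOpen_preimage_gval isOpen_Iio).mem_nhds hc1, ?_⟩
    rintro ⟨p, q⟩ ⟨hp, hq⟩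
    show p + q ∈ U
    have hpq : gval q < gval p := lt_trans hq hp.2
    rw [add_left_dominant hpq]
    exact hp.1

lemma isClosed_ghost : IsClosed {x : T | isGhost x} := by
  rw [← isOpen_compl_iff, isOpen_iff', compl_compl]
  have h1 : {x : T | isGhost x} ∩ {x : T | isTangible x} = {(none : T)} := by
    ext x
    constructor
    · rintro ⟨hg, ht⟩
      exact eq_none_of_tang_ghost ht hg
    · rintro rfl
      exact ⟨trivial, trivial⟩
  refine ⟨?_, ?_, ?_⟩
  · rw [h1]
    have himg : gval '' {(none : T)} = ({0} : Set ℝ) := by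
      ext y
      constructor
      · rintro ⟨x, hx, rfl⟩
        cases hx
        rfl
      · rintro rfl
        exact ⟨none, rfl, rfl⟩
    rw [himg]
    exact isClosed_singleton
  · rw [Set.inter_self, gval_image_ghost]
    exact isClosed_Ici
  · rintro y ⟨x, -, rfl⟩
    exact ⟨nu_isGhost x, nu_isGhost x⟩

lemma continuous_eval {n : ℕ} (f : MvPolynomial (Fin n) T) :
    Continuous fun a : Fin n → T => MvPolynomial.eval a f := by
  induction f using MvPolynomial.induction_on with
  | C c =>
    simp only [MvPolynomial.eval_C]
    exact continuous_const
  | add p q hp hq =>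
    simp only [MvPolynomial.eval_add]
    exact hp.add hq
  | mul_X p i hp =>
    simp only [MvPolynomial.eval_mul, MvPolynomial.eval_X]
    exact hp.mul (continuous_apply i)

end T

/-- Lemma `lem:openAlgSet`: every tropical algebraic set is closed
in the topology of `𝕋^n`. -/
theorem tropical_algebraic_set_isClosed (n : ℕ) (F : Set (MvPolynomial (Fin n) T)) :
    IsClosed {a : Fin n → T | ∀ f ∈ F, T.isGhost (MvPolynomial.eval a f)} := by
  have heq : {a : Fin n → T | ∀ f ∈ F, T.isGhost (MvPolynomial.eval a f)}
      = ⋂ f ∈ F, (fun a : Fin n → T => MvPolynomial.eval a f) ⁻¹' {x : T | T.isGhost x} := by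
    ext a
    simp only [Set.mem_setOf_eq, Set.mem_iInter, Set.mem_preimage]
  rw [heq]
  exact isClosed_biInter fun f _ => T.isClosed_ghost.preimage (T.continuous_eval f)
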